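/- Let δ̃ have mean 0 and positive definite covariance Σ, and let U = {δ : Aδ ≤ b} with b_i > 0 for all i ∈ [k]. Define R = min_{i∈[k]} b_i/‖A_i Σ^{1/2}‖₂. If (x,y) satisfies the robust constraint δᵀ C x + dᵀ y ≤ c for all δ ∈ U, then P[δ̃ᵀ C x + dᵀ y > c] ≤ 1/(1 + R²). -/

import Mathlib

open Matrix MeasureTheory

noncomputable def euclNorm {m : ℕ} (v : Fin m → ℝ) : ℝ := Real.sqrt (∑ i, v i ^ 2)

/-- for a random vector `δ̃` with mean 0 and positive definite covariance `Σ`,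
and a polyhedron `U = {δ : Aδ ≤ b}` with `b > 0`, setting `R = min_i b_i / ‖A_i Σ^{1/2}‖₂`,
any `(x, y)` satisfying the robust constraint over `U` violates the uncertain constraint
with probability at most `1/(1 + R²)`. -/
theorem stmt13 {n k nx ny : ℕ} {Ωs : Type*} [MeasurableSpace Ωs] (μ : Measure Ωs)
    [IsProbabilityMeasure μ] (X : Ωs → Fin n → ℝ)
    (hXm : ∀ i, Measurable fun ω => X ω i)
    (hint : ∀ i j, Integrable (fun ω => X ω i * X ω j) μ)
    (Sig S : Matrix (Fin n) (Fin n) ℝ)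
    (hSig : Sig.PosDef) (hS : S.PosDef) (hSsq : S * S = Sig)
    (hmean : ∀ i, ∫ ω, X ω i ∂μ = 0)
    (hcov : ∀ i j, ∫ ω, X ω i * X ω j ∂μ = Sig i j)
    (A : Matrix (Fin k) (Fin n) ℝ) (b : Fin k → ℝ) (hb : ∀ i, 0 < b i)
    (R : ℝ) (hR : IsLeast {r : ℝ | ∃ i, r = b i / euclNorm ((A i) ᵥ* S)} R)
    (C : Matrix (Fin n) (Fin nx) ℝ) (d : Fin ny → ℝ) (c : ℝ)
    (x : Fin nx → ℝ) (y : Fin ny → ℝ)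
    (hrob : ∀ δ : Fin n → ℝ, (∀ i, (A *ᵥ δ) i ≤ b i) →
      δ ⬝ᵥ (C *ᵥ x) + d ⬝ᵥ y ≤ c) :
    (μ {ω | c < X ω ⬝ᵥ (C *ᵥ x) + d ⬝ᵥ y}).toReal ≤ 1 / (1 + R ^ 2) := by
  classical
  obtain ⟨⟨i0, hi0⟩, hRlb⟩ := hR
  have hR0 : 0 ≤ R := hi0 ▸ div_nonneg (hb i0).le (Real.sqrt_nonneg _)
  set v : Fin n → ℝ := C *ᵥ x with hv
  set e : ℝ := d ⬝ᵥ y with he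
  -- trivial case v = 0
  by_cases hvz : v = 0
  · have hce : e ≤ c := by
      have := hrob 0 (fun i => by simp [mulVec_zero]; exact (hb i).le)
      simpa using this
    have hset : {ω | c < X ω ⬝ᵥ v + e} = ∅ := by
      ext ω
      simp only [Set.mem_setOf_eq, Set.mem_empty_iff_false, iff_false, not_lt, hvz,
        dotProduct_zero, zero_add]
      exact hce
    rw [hset]
    simp only [measure_empty, ENNReal.toReal_zero]
    positivity
  -- trivial case R = 0
  rcases eq_or_lt_of_le hR0 with hRz | hRpos
  · rw [← hRz]
    norm_num
    calc (μ {ω | c < X ω ⬝ᵥ v + e}).toReal ≤ (1 : ENNReal).toReal :=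
          ENNReal.toReal_mono ENNReal.one_ne_top prob_le_one
      _ = 1 := ENNReal.toReal_one
  -- main case
  set w : Fin n → ℝ := S *ᵥ v with hw
  set σ2 : ℝ := ∑ i, w i ^ 2 with hσ2
  have hσ2nn : 0 ≤ σ2 := Finset.sum_nonneg fun i _ => sq_nonneg _
  have hST : Sᵀ = S := by
    have := hS.isHermitian.eq
    simpa using this
  have hσ2pos : 0 < σ2 := by
    rcases lt_or_eq_of_le hσ2nn with h | h
    · exact h
    · exfalso
      have hwz : w = 0 := by
        funext i
        have : ∀ j ∈ Finset.univ, (0:ℝ) ≤ w j ^ 2 := fun j _ => sq_nonneg _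
        have := (Finset.sum_eq_zero_iff_of_nonneg this).mp h.symm i (Finset.mem_univ i)
        exact pow_eq_zero_iff (by norm_num) |>.mp this
      have hpos := hS.dotProduct_mulVec_pos hvz
      simp only [star_trivial] at hpos
      rw [← hw] at hpos
      -- v ⬝ᵥ w > 0 but w = 0
      rw [hwz, dotProduct_zero] at hpos
      exact lt_irrefl 0 hpos
  set σ : ℝ := Real.sqrt σ2 with hσdef
  have hσpos : 0 < σ := Real.sqrt_pos.mpr hσ2pos
  have hσsq : σ ^ 2 = σ2 := Real.sq_sqrt hσ2nn
  -- key symmetry computation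
  have hsymm : ∀ z : Fin n → ℝ, z ⬝ᵥ (S *ᵥ w) = (S *ᵥ z) ⬝ᵥ w := by
    intro z
    rw [dotProduct_mulVec, ← mulVec_transpose, hST]
  -- the robust direction
  set δ : Fin n → ℝ := (R / σ) • (S *ᵥ w) with hδ
  have hAδ : ∀ i, (A *ᵥ δ) i ≤ b i := by
    intro i
    have hN : R ≤ b i / euclNorm ((A i) ᵥ* S) := hRlb ⟨i, rfl⟩
    set u : Fin n → ℝ := (A i) ᵥ* S with hu
    have haNN : 0 ≤ euclNorm u := Real.sqrt_nonneg _
    have hapos : 0 < euclNorm u := by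
      rcases lt_or_eq_of_le haNN with h | h
      · exact h
      · exfalso; rw [← h, div_zero] at hN; linarith
    have hasq : euclNorm u ^ 2 = ∑ j, u j ^ 2 :=
      Real.sq_sqrt (Finset.sum_nonneg fun j _ => sq_nonneg _)
    have hCS : u ⬝ᵥ w ≤ euclNorm u * σ := by
      have h1 := Finset.sum_mul_sq_le_sq_mul_sq Finset.univ u w
      have h2 : 0 ≤ euclNorm u * σ := mul_nonneg haNN hσpos.le
      have h3 : (u ⬝ᵥ w) ^ 2 ≤ (euclNorm u * σ) ^ 2 := by
        rw [mul_pow, hasq, hσsq]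
        simpa [dotProduct] using h1
      nlinarith [h3, h2]
    have hAδi : (A *ᵥ δ) i = (R / σ) * (u ⬝ᵥ w) := by
      rw [hδ, mulVec_smul]
      simp only [Pi.smul_apply, smul_eq_mul]
      congr 1
      show (A *ᵥ (S *ᵥ w)) i = u ⬝ᵥ w
      rw [hu]
      show A i ⬝ᵥ (S *ᵥ w) = _
      rw [dotProduct_mulVec]
    rw [hAδi]
    have h4 : (R / σ) * (u ⬝ᵥ w) ≤ (R / σ) * (euclNorm u * σ) :=
      mul_le_mul_of_nonneg_left hCS (div_nonneg hRpos.le hσpos.le)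
    have h5 : (R / σ) * (euclNorm u * σ) = R * euclNorm u := by
      field_simp
    have h6 : R * euclNorm u ≤ b i := by
      rw [le_div_iff₀ hapos] at hN
      exact hN
    linarith
  have hδv : δ ⬝ᵥ v = R * σ := by
    rw [hδ]
    have : ((R / σ) • (S *ᵥ w)) ⬝ᵥ v = (R / σ) * ((S *ᵥ w) ⬝ᵥ v) := smul_dotProduct _ _ _
    rw [this, dotProduct_comm, hsymm v, ← hw]
    have hww : w ⬝ᵥ w = σ2 := by simp [dotProduct, hσ2, sq]
    rw [hww, ← hσsq]
    field_simp
  have ht : R * σ + e ≤ c := by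
    have := hrob δ hAδ
    rw [hδv] at this
    exact this
  -- variance computation
  have hXint : ∀ i, Integrable (fun ω => X ω i) μ := by
    intro i
    have hbound : Integrable (fun ω => (1 + X ω i * X ω i) / 2) μ :=
      ((integrable_const 1).add (hint i i)).div_const 2
    apply hbound.mono' (hXm i).aestronglyMeasurable
    filter_upwards with ω
    rw [Real.norm_eq_abs]
    nlinarith [sq_nonneg (|X ω i| - 1), sq_abs (X ω i), abs_nonneg (X ω i)]
  have hξm : Measurable (fun ω => X ω ⬝ᵥ v) := by
    simp only [dotProduct]
    exact Finset.measurable_sum _ fun i _ => (hXm i).mul_const _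
  have hξint : Integrable (fun ω => X ω ⬝ᵥ v) μ := by
    simp only [dotProduct]
    exact integrable_finset_sum _ fun i _ => (hXint i).mul_const _
  have hξmean : ∫ ω, X ω ⬝ᵥ v ∂μ = 0 := by
    simp only [dotProduct]
    rw [integral_finset_sum _ fun i _ => (hXint i).mul_const _]
    refine Finset.sum_eq_zero fun i _ => ?_
    rw [integral_mul_const, hmean i, zero_mul]
  have hsq_eq : (fun ω => (X ω ⬝ᵥ v) ^ 2)
      = fun ω => ∑ i, ∑ j, (v i * v j) * (X ω i * X ω j) := by
    funext ω
    simp only [dotProduct, sq, Finset.sum_mul_sum]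
    exact Finset.sum_congr rfl fun i _ => Finset.sum_congr rfl fun j _ => by ring
  have hsqint : Integrable (fun ω => (X ω ⬝ᵥ v) ^ 2) μ := by
    rw [hsq_eq]
    exact integrable_finset_sum _ fun i _ =>
      integrable_finset_sum _ fun j _ => (hint i j).const_mul _
  have hvar : ∫ ω, (X ω ⬝ᵥ v) ^ 2 ∂μ = σ2 := by
    rw [hsq_eq]
    rw [integral_finset_sum _ fun i _ =>
      integrable_finset_sum _ fun j _ => (hint i j).const_mul _]
    have : ∀ i, ∫ ω, ∑ j, (v i * v j) * (X ω i * X ω j) ∂μ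
        = ∑ j, (v i * v j) * Sig i j := by
      intro i
      rw [integral_finset_sum _ fun j _ => (hint i j).const_mul _]
      exact Finset.sum_congr rfl fun j _ => by rw [integral_const_mul, hcov]
    rw [Finset.sum_congr rfl fun i _ => this i]
    -- now show the quadratic form equals σ2
    have h1 : ∑ i, ∑ j, (v i * v j) * Sig i j = v ⬝ᵥ (Sig *ᵥ v) := by
      simp only [dotProduct, mulVec, Finset.mul_sum]
      exact Finset.sum_congr rfl fun i _ => Finset.sum_congr rfl fun j _ => by
        ring
    rw [h1, ← hSsq, ← mulVec_mulVec, ← hw, hsymm v, ← hw]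
    simp [dotProduct, hσ2, sq]
  -- Markov / Cantelli
  set u0 : ℝ := σ / R with hu0
  have hu0pos : 0 < u0 := div_pos hσpos hRpos
  set f : Ωs → ℝ := fun ω => (X ω ⬝ᵥ v + u0) ^ 2 with hf
  have hfint : Integrable f μ := by
    have : f = fun ω => (X ω ⬝ᵥ v) ^ 2 + (2 * u0) * (X ω ⬝ᵥ v) + u0 ^ 2 := by
      funext ω; rw [hf]; ring
    rw [this]
    exact (hsqint.add (hξint.const_mul _)).add (integrable_const _)
  have hfI : ∫ ω, f ω ∂μ = σ2 + u0 ^ 2 := by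
    have heq : f = fun ω => (X ω ⬝ᵥ v) ^ 2 + (2 * u0) * (X ω ⬝ᵥ v) + u0 ^ 2 := by
      funext ω; rw [hf]; ring
    calc ∫ ω, f ω ∂μ = ∫ ω, ((X ω ⬝ᵥ v) ^ 2 + (2 * u0) * (X ω ⬝ᵥ v) + u0 ^ 2) ∂μ := by
          apply integral_congr_ae
          filter_upwards with ω
          rw [hf]; ring
      _ = σ2 + u0 ^ 2 := by
          have h1 : Integrable (fun ω => (X ω ⬝ᵥ v) ^ 2 + (2 * u0) * (X ω ⬝ᵥ v)) μ :=
            hsqint.add (hξint.const_mul _)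
          have h2 : Integrable (fun ω => (2 * u0) * (X ω ⬝ᵥ v)) μ := hξint.const_mul _
          rw [integral_add h1 (integrable_const _), integral_add hsqint h2,
            integral_const_mul, hξmean, hvar]
          simp [measure_univ]
  set ε : ℝ := (c - e + u0) ^ 2 with hε
  have hRσ : 0 < R * σ := mul_pos hRpos hσpos
  have hcepos : 0 < c - e + u0 := by linarith
  have hεpos : 0 < ε := by positivity
  have hsub : {ω | c < X ω ⬝ᵥ v + e} ⊆ {ω | ε ≤ f ω} := by
    intro ω hω
    simp only [Set.mem_setOf_eq] at hω ⊢
    rw [hε, hf]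
    have h1 : c - e + u0 ≤ X ω ⬝ᵥ v + u0 := by linarith
    exact pow_le_pow_left₀ hcepos.le h1 2
  have hmarkov := mul_meas_ge_le_integral_of_nonneg
    (ae_of_all μ fun ω => sq_nonneg (X ω ⬝ᵥ v + u0)) hfint ε
  rw [hfI] at hmarkov
  have hmono : (μ {ω | c < X ω ⬝ᵥ v + e}).toReal ≤ (μ {ω | ε ≤ f ω}).toReal :=
    ENNReal.toReal_mono (measure_ne_top μ _) (measure_mono hsub)
  have hP : (μ {ω | ε ≤ f ω}).toReal ≤ (σ2 + u0 ^ 2) / ε := by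
    rw [le_div_iff₀ hεpos]
    rw [measureReal_def] at hmarkov
    linarith [hmarkov]
  have hfinal : (σ2 + u0 ^ 2) / ε ≤ 1 / (1 + R ^ 2) := by
    rw [div_le_div_iff₀ hεpos (by positivity)]
    -- (σ2 + u0²)(1 + R²) ≤ ε
    have huR : u0 * R = σ := by rw [hu0]; field_simp
    have hRσu : R * σ = u0 * R ^ 2 := by rw [← huR]; ring
    have htt : u0 * R ^ 2 ≤ c - e := by linarith
    have hl : u0 * (1 + R ^ 2) ≤ c - e + u0 := by nlinarith
    have hlpos : 0 ≤ u0 * (1 + R ^ 2) := by positivity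
    have key : (u0 * (1 + R ^ 2)) ^ 2 ≤ (c - e + u0) ^ 2 := pow_le_pow_left₀ hlpos hl 2
    have hσ2eq : σ2 = (u0 * R) ^ 2 := by rw [huR, hσsq]
    have expand : (σ2 + u0 ^ 2) * (1 + R ^ 2) = (u0 * (1 + R ^ 2)) ^ 2 := by
      rw [hσ2eq]; ring
    rw [hε]
    linarith
  exact hmono.trans (hP.trans hfinal)
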